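/- Fix an integer p > 1 and let x = (p−1)/p. Then (log₂(1/(1 − (p/2 + 1)·x^{p−1}·(1−x))))^{−1} ≤ 3.411. -/

import Mathlib

open Real

/-- for an integer `p > 1` and `x = (p-1)/p`,
`(log₂(1/(1 - (p/2 + 1) x^{p-1}(1-x))))⁻¹ ≤ 3.411`. -/
theorem stmt8 (p : ℕ) (hp : 1 < p) :
    letI x : ℝ := ((p : ℝ) - 1) / p
    (Real.logb 2 (1 / (1 - ((p : ℝ) / 2 + 1) * x ^ (p - 1) * (1 - x))))⁻¹ ≤ 3.411 := by
  set x : ℝ := ((p : ℝ) - 1) / p with hx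
  have hp2 : (2:ℝ) ≤ (p:ℝ) := by exact_mod_cast hp
  have hp0 : (0:ℝ) < (p:ℝ) := by linarith
  have h1x : (1:ℝ) - x = 1 / p := by rw [hx]; field_simp; ring
  have hx0 : 0 < x := by rw [hx]; apply div_pos <;> linarith
  have hx1 : x < 1 := by rw [hx, div_lt_one hp0]; linarith
  have hn : ((p - 1 : ℕ) : ℝ) = (p:ℝ) - 1 := by
    push_cast [Nat.cast_sub hp.le]; ring
  have hp1 : (0:ℝ) < (p:ℝ) - 1 := by linarith
  have hinvx : x⁻¹ = (p:ℝ) / ((p:ℝ) - 1) := by rw [hx, inv_div]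
  have hlogx : -(1 / ((p:ℝ) - 1)) ≤ Real.log x := by
    have h := Real.one_sub_inv_le_log_of_pos hx0
    rw [hinvx] at h
    have h2 : 1 - (p:ℝ)/((p:ℝ)-1) = -(1/((p:ℝ)-1)) := by field_simp; ring
    linarith [h2 ▸ h]
  have hpow : Real.exp (-1) ≤ x ^ (p - 1) := by
    have he : x ^ (p - 1) = Real.exp (((p - 1 : ℕ):ℝ) * Real.log x) := by
      rw [← Real.log_pow, Real.exp_log (by positivity)]
    rw [he]
    apply Real.exp_le_exp.2
    rw [hn]
    calc (-1 : ℝ) = ((p:ℝ) - 1) * (-(1/((p:ℝ)-1))) := by field_simp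
      _ ≤ ((p:ℝ) - 1) * Real.log x := mul_le_mul_of_nonneg_left hlogx hp1.le
  set t : ℝ := ((p : ℝ) / 2 + 1) * x ^ (p - 1) * (1 - x) with ht
  have hteq : t = (1/2 + 1/(p:ℝ)) * x ^ (p - 1) := by
    rw [ht, h1x]; field_simp
  have hexpneg : (0.3678794411:ℝ) ≤ Real.exp (-1) := by
    rw [Real.exp_neg]
    have h1 : ((2.7182818286:ℝ))⁻¹ < (Real.exp 1)⁻¹ :=
      inv_strictAnti₀ (Real.exp_pos 1) Real.exp_one_lt_d9
    have h2 : (0.3678794411:ℝ) ≤ ((2.7182818286:ℝ))⁻¹ := by norm_num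
    linarith
  have hpinv : (0:ℝ) < 1/(p:ℝ) := by positivity
  have hpinv2 : (1:ℝ)/(p:ℝ) ≤ 1/2 := by
    rw [div_le_div_iff₀ hp0 (by norm_num)]; linarith
  have htc : (0.183939 : ℝ) ≤ t := by
    rw [hteq]
    have hpowpos : (0:ℝ) < x ^ (p - 1) := by positivity
    nlinarith [hpow, hexpneg]
  have hxpow_le : x ^ (p - 1) ≤ x := by
    apply pow_le_of_le_one hx0.le hx1.le
    omega
  have htx : t ≤ x := by
    rw [hteq]
    have hpowpos : (0:ℝ) < x ^ (p - 1) := by positivity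
    nlinarith [hxpow_le]
  have h1t : (0:ℝ) < 1 - t := by linarith
  have h1tc : 1 - t ≤ 0.816061 := by linarith
  have hlog2 : (0:ℝ) < Real.log 2 := Real.log_pos (by norm_num)
  have hLlb : (3.411:ℝ)⁻¹ ≤ Real.logb 2 (1/(1-t)) := by
    rw [Real.logb, le_div_iff₀ hlog2]
    have key : (2:ℝ)^(1000:ℕ) ≤ ((1:ℝ)/0.816061)^(3411:ℕ) := by
      rw [div_pow, le_div_iff₀ (by positivity), one_pow]
      have hN : (2:ℕ)^1000 * 816061^3411 ≤ 1000000^3411 := by decide +kernel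
      have hc : (0.816061:ℝ) = 816061 / 1000000 := by norm_num
      rw [hc, div_pow, mul_div_assoc', div_le_one (by positivity)]
      exact_mod_cast hN
    have hmono : (1:ℝ)/0.816061 ≤ 1/(1-t) :=
      one_div_le_one_div_of_le h1t h1tc
    have h1 := Real.log_le_log (by positivity) key
    rw [Real.log_pow, Real.log_pow] at h1
    have h2 := Real.log_le_log (by norm_num) hmono
    push_cast at h1
    have h36 : (3.411:ℝ)⁻¹ = 1000/3411 := by norm_num
    rw [h36]
    nlinarith [h1, h2]
  calc (Real.logb 2 (1/(1-t)))⁻¹ ≤ ((3.411:ℝ)⁻¹)⁻¹ :=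
      inv_anti₀ (by norm_num) hLlb
    _ = 3.411 := by norm_num
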